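/- arXiv:1504.02250 — 2 statements merged into one kernel-verified Lean document; each statement's English description precedes it below -/
import Mathlib

section
/- Let M be a maximum matching in a bipartite graph G such that D(M) is acyclic and both G[V^+(M)] and G[V^-(M)] are forests. If a maximum matching M' arises from M by a single edge exchange, then D(M') is acyclic. -/
variable {V : Type*}

/-- `M` is a matching in `G`: a set of edges of `G` that are pairwise disjoint. -/
def IsMatchingSet (G : SimpleGraph V) (M : Set (Sym2 V)) : Prop :=
  M ⊆ G.edgeSet ∧ ∀ e ∈ M, ∀ f ∈ M, e ≠ f → ∀ v : V, v ∈ e → v ∉ f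

/-- `V(M)`: the set of vertices covered by the matching `M`. -/
def matVerts (M : Set (Sym2 V)) : Set V := {v | ∃ e ∈ M, v ∈ e}

/-- `M` is a maximum matching in `G`. -/
def IsMaximumMatching (G : SimpleGraph V) (M : Set (Sym2 V)) : Prop :=
  IsMatchingSet G M ∧ ∀ M', IsMatchingSet G M' → M'.ncard ≤ M.ncard

/-- `M` is uniquely restricted: no matching distinct from `M` covers the same vertices. -/
def UniquelyRestricted (G : SimpleGraph V) (M : Set (Sym2 V)) : Prop :=
  ∀ M', IsMatchingSet G M' → matVerts M' = matVerts M → M' = M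

/-- `M` is a perfect matching of `G`. -/
def IsPerfectMatchingSet (G : SimpleGraph V) (M : Set (Sym2 V)) : Prop :=
  IsMatchingSet G M ∧ matVerts M = Set.univ

/-- `A, B` form a bipartition of `G`. -/
def IsBipartition (G : SimpleGraph V) (A B : Set V) : Prop :=
  Disjoint A B ∧ A ∪ B = Set.univ ∧
    ∀ ⦃u v : V⦄, G.Adj u v → (u ∈ A ∧ v ∈ B) ∨ (u ∈ B ∧ v ∈ A)

/-- `I` is an independent set in `G`. -/
def IsIndepSet (G : SimpleGraph V) (I : Set V) : Prop :=
  ∀ u ∈ I, ∀ v ∈ I, ¬ G.Adj u v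

/-- `I` is a maximum independent set in `G`. -/
def IsMaximumIndepSet (G : SimpleGraph V) (I : Set V) : Prop :=
  IsIndepSet G I ∧ ∀ J, IsIndepSet G J → J.ncard ≤ I.ncard

/-- The arcs of the digraph `D(M)`: edges not in `M` oriented from `A` to `B`,
edges of `M` oriented from `B` to `A`. -/
def DMarc (G : SimpleGraph V) (A B : Set V) (M : Set (Sym2 V)) (u v : V) : Prop :=
  G.Adj u v ∧ ((u ∈ A ∧ v ∈ B ∧ s(u, v) ∉ M) ∨ (u ∈ B ∧ v ∈ A ∧ s(u, v) ∈ M))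

/-- The digraph `D(M)` is acyclic. -/
def DMAcyclic (G : SimpleGraph V) (A B : Set V) (M : Set (Sym2 V)) : Prop :=
  ∀ v : V, ¬ Relation.TransGen (DMarc G A B M) v v

/-- `V⁺(M)`: vertices reachable in `D(M)` from an `A`-vertex uncovered by `M`. -/
def Vplus (G : SimpleGraph V) (A B : Set V) (M : Set (Sym2 V)) : Set V :=
  {v | ∃ a ∈ A, a ∉ matVerts M ∧ Relation.ReflTransGen (DMarc G A B M) a v}

/-- `V⁻(M)`: vertices from which a `B`-vertex uncovered by `M` is reachable in `D(M)`. -/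
def Vminus (G : SimpleGraph V) (A B : Set V) (M : Set (Sym2 V)) : Set V :=
  {v | ∃ b ∈ B, b ∉ matVerts M ∧ Relation.ReflTransGen (DMarc G A B M) v b}

/-- Given a linear ordering `l` of an independent set, `Mσ G l` is the set of edges
`y·p(y)` where `p(y)` is the first vertex of `l` adjacent to `y`. -/
def Msigma (G : SimpleGraph V) (l : List V) : Set (Sym2 V) :=
  {e | ∃ (i : Fin l.length) (y : V), e = s(y, l.get i) ∧ G.Adj (l.get i) y ∧
      ∀ j : Fin l.length, (j : ℕ) < (i : ℕ) → ¬ G.Adj (l.get j) y}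

/-- `l` is an accessibility ordering of `I`: it enumerates `I` without repetition
and `Mσ` is a matching. -/
def IsAccessibilityOrdering (G : SimpleGraph V) (I : Set V) (l : List V) : Prop :=
  l.Nodup ∧ {v | v ∈ l} = I ∧ IsMatchingSet G (Msigma G l)

/-- A partial accessibility ordering: an accessibility ordering of a subset of `I`. -/
def IsPartialAccessibilityOrdering (G : SimpleGraph V) (I : Set V) (l : List V) : Prop :=
  l.Nodup ∧ {v | v ∈ l} ⊆ I ∧ IsMatchingSet G (Msigma G l)

/-- `c` is an `M`-alternating cycle: of every two adjacent edges exactly one is in `M`. -/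
def IsAlternatingCycle (G : SimpleGraph V) (M : Set (Sym2 V)) {v : V} (c : G.Walk v v) : Prop :=
  c.IsCycle ∧ (c.edges ++ c.edges.take 1).Chain' (fun e f => e ∈ M ↔ f ∉ M)

/-- `M'` arises from `M` by a single edge exchange. -/
def EdgeExchange (G : SimpleGraph V) (A B : Set V) (M M' : Set (Sym2 V)) : Prop :=
  (∃ a a' b' : V, a ∈ A ∧ a ∉ matVerts M ∧ s(a', b') ∈ M ∧ G.Adj a b' ∧
      M' = (M \ {s(a', b')}) ∪ {s(a, b')}) ∨
  (∃ b a' b' : V, b ∈ B ∧ b ∉ matVerts M ∧ s(a', b') ∈ M ∧ G.Adj a' b ∧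
      M' = (M \ {s(a', b')}) ∪ {s(a', b)})

section CycleHelpers

open SimpleGraph

variable {G : SimpleGraph V}

private lemma walk_rtg {r : V → V → Prop} {u v : V} (p : G.Walk u v)
    (hp : ∀ d ∈ p.darts, r d.fst d.snd) :
    ∀ w ∈ p.support, Relation.ReflTransGen r u w ∧ Relation.ReflTransGen r w v := by
  induction p with
  | nil =>
    intro w hw
    simp only [SimpleGraph.Walk.support_nil, List.mem_singleton] at hw
    subst hw
    exact ⟨Relation.ReflTransGen.refl, Relation.ReflTransGen.refl⟩
  | cons h q ih =>
    intro w hw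
    have hr := hp _ List.mem_cons_self
    have hq : ∀ d ∈ q.darts, r d.fst d.snd := fun d hd =>
      hp d (List.mem_cons_of_mem _ hd)
    rw [SimpleGraph.Walk.support_cons] at hw
    rcases List.mem_cons.mp hw with rfl | hw
    · exact ⟨Relation.ReflTransGen.refl,
        Relation.ReflTransGen.head hr (ih hq _ q.start_mem_support).2⟩
    · obtain ⟨h1, h2⟩ := ih hq w hw
      exact ⟨Relation.ReflTransGen.head hr h1, h2⟩

private lemma walk_tg {r : V → V → Prop} {u v : V} (p : G.Walk u v)
    (hp : ∀ d ∈ p.darts, r d.fst d.snd) (hn : ¬ p.Nil) : Relation.TransGen r u v := by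
  cases p with
  | nil => simp at hn
  | cons h q =>
    have hr := hp _ List.mem_cons_self
    have hq : ∀ d ∈ q.darts, r d.fst d.snd := fun d hd =>
      hp d (List.mem_cons_of_mem _ hd)
    exact Relation.TransGen.head' hr (walk_rtg q hq _ q.end_mem_support).1

private lemma mem_tail_of_closed {v : V} (p : G.Walk v v) (hn : ¬ p.Nil) {x : V}
    (hx : x ∈ p.support) : x ∈ p.support.tail := by
  cases p with
  | nil => simp at hn
  | cons h q =>
    rw [SimpleGraph.Walk.support_cons, List.tail_cons]
    rw [SimpleGraph.Walk.support_cons] at hx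
    rcases List.mem_cons.mp hx with rfl | hx
    · exact q.end_mem_support
    · exact hx

private lemma exists_in_dart {v : V} (p : G.Walk v v) (hn : ¬ p.Nil) {x : V}
    (hx : x ∈ p.support) : ∃ d ∈ p.darts, d.snd = x := by
  have h1 := mem_tail_of_closed p hn hx
  rw [← SimpleGraph.Walk.map_snd_darts] at h1
  obtain ⟨d, hd, hds⟩ := List.mem_map.mp h1
  exact ⟨d, hd, hds⟩

private lemma exists_out_dart {v : V} (p : G.Walk v v) (hn : ¬ p.Nil) {x : V}
    (hx : x ∈ p.support) : ∃ d ∈ p.darts, d.fst = x := by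
  have hn' : ¬ p.reverse.Nil := by
    rw [SimpleGraph.Walk.nil_iff_length_eq] at hn ⊢
    simpa using hn
  obtain ⟨d, hd, hds⟩ := exists_in_dart p.reverse hn'
    (by rw [SimpleGraph.Walk.support_reverse]; simpa using hx)
  refine ⟨d.symm, SimpleGraph.Walk.mem_darts_reverse.mp hd, ?_⟩
  simpa using hds

private lemma dart_edge_mem {u v : V} {p : G.Walk u v} {d : G.Dart} (hd : d ∈ p.darts) :
    s(d.fst, d.snd) ∈ p.edges := by
  have : p.edges = p.darts.map SimpleGraph.Dart.edge := rfl
  rw [this]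
  exact List.mem_map_of_mem hd

private lemma exists_dir_cycle [DecidableEq V] {r : V → V → Prop} (hr : ∀ u v, r u v → G.Adj u v)
    (hanti : ∀ u v, r u v → ¬ r v u) {v : V} (h : Relation.TransGen r v v) :
    ∃ (w : V) (C : G.Walk w w), C.IsCycle ∧ ∀ d ∈ C.darts, r d.fst d.snd := by
  obtain ⟨u, hvu, hrt⟩ := Relation.TransGen.head'_iff.mp h
  have hW : ∃ W : G.Walk u v, ∀ d ∈ W.darts, r d.fst d.snd := by
    clear hvu h
    induction hrt using Relation.ReflTransGen.head_induction_on with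
    | refl => exact ⟨SimpleGraph.Walk.nil, by simp⟩
    | head hab _ ih =>
      obtain ⟨W, hWd⟩ := ih
      refine ⟨SimpleGraph.Walk.cons (hr _ _ hab) W, ?_⟩
      intro d hd
      rcases List.mem_cons.mp hd with rfl | hd
      · exact hab
      · exact hWd d hd
  obtain ⟨W, hWd⟩ := hW
  have hPp : W.bypass.IsPath := W.bypass_isPath
  have hPd : ∀ d ∈ W.bypass.darts, r d.fst d.snd := fun d hd =>
    hWd d (W.darts_bypass_subset hd)
  refine ⟨v, SimpleGraph.Walk.cons (hr v u hvu) W.bypass, ?_, ?_⟩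
  · rw [SimpleGraph.Walk.cons_isCycle_iff]
    refine ⟨hPp, fun hmem => ?_⟩
    have hedef : W.bypass.edges = W.bypass.darts.map SimpleGraph.Dart.edge := rfl
    rw [hedef] at hmem
    obtain ⟨d, hd, hde⟩ := List.mem_map.mp hmem
    have hde' : s(d.fst, d.snd) = s(v, u) := hde
    rcases Sym2.eq_iff.mp hde' with ⟨h1, h2⟩ | ⟨h1, h2⟩
    · -- d.fst = v : v occurs in dropLast of a path ending at v
      have hvmem : v ∈ W.bypass.support.dropLast := by
        rw [← SimpleGraph.Walk.map_fst_darts]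
        exact List.mem_map.mpr ⟨d, hd, h1⟩
      have hlast := W.bypass.getLast_support
      have hnd : W.bypass.support.Nodup := hPp.support_nodup
      have heq := List.dropLast_append_getLast (W.bypass.support_ne_nil)
      rw [hlast] at heq
      rw [← heq, List.nodup_append] at hnd
      exact hnd.2.2 v hvmem v (List.mem_singleton_self v) rfl
    · have := hPd d hd
      rw [h1, h2] at this
      exact hanti v u hvu this
  · intro d hd
    rcases List.mem_cons.mp hd with rfl | hd
    · exact hvu
    · exact hPd d hd

private lemma no_cycle_in_set {S : Set V} (hS : (G.induce S).IsAcyclic) {w : V}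
    (C : G.Walk w w) (hC : C.IsCycle) (hsub : ∀ x ∈ C.support, x ∈ S) : False := by
  suffices h : ∀ (u v : V) (p : G.Walk u v), (∀ x ∈ p.support, x ∈ S) →
      ∀ (hu : u ∈ S) (hv : v ∈ S),
      ∃ q : (G.induce S).Walk ⟨u, hu⟩ ⟨v, hv⟩,
        q.support.map Subtype.val = p.support ∧
        q.edges.map (Sym2.map Subtype.val) = p.edges by
    have hw : w ∈ S := hsub w C.start_mem_support
    obtain ⟨q, hqs, hqe⟩ := h w w C hsub hw hw
    refine hS q ?_
    rw [SimpleGraph.Walk.isCycle_def, SimpleGraph.Walk.isTrail_def]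
    refine ⟨?_, ?_, ?_⟩
    · have := hC.edges_nodup
      rw [← hqe] at this
      exact this.of_map _
    · intro hnil
      have h3 := hC.three_le_length
      have : C.edges = [] := by rw [← hqe, hnil]; simp
      have h0 := congrArg List.length this
      rw [SimpleGraph.Walk.length_edges, List.length_nil] at h0
      omega
    · have := hC.2
      have htail : q.support.tail.map Subtype.val = C.support.tail := by
        rw [← hqs, List.map_tail]
      rw [← htail] at this
      exact this.of_map _
  intro u v p
  induction p with
  | nil =>
    intro _ hu hv
    exact ⟨SimpleGraph.Walk.nil, by simp, by simp⟩
  | @cons x y z h q ih =>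
    intro hp hu hv
    have hy : y ∈ S := hp y (by simp)
    obtain ⟨q', hs, he⟩ := ih (fun t ht => hp t (by simp [ht])) hy hv
    have hadj : (G.induce S).Adj ⟨x, hu⟩ ⟨y, hy⟩ := by simpa using h
    refine ⟨SimpleGraph.Walk.cons hadj q', ?_, ?_⟩
    · rw [SimpleGraph.Walk.support_cons, List.map_cons, hs,
        SimpleGraph.Walk.support_cons]
    · rw [SimpleGraph.Walk.edges_cons, List.map_cons, he,
        SimpleGraph.Walk.edges_cons]
      rfl

end CycleHelpers

/-- If `D(M)` is acyclic and `G[V⁺(M)]`, `G[V⁻(M)]` are forests, then a single edge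
exchange yields a matching `M'` with `D(M')` acyclic. -/
theorem stmt12 [Fintype V] (G : SimpleGraph V) (A B : Set V) (hbip : IsBipartition G A B)
    (M : Set (Sym2 V)) (hM : IsMaximumMatching G M) (hacyc : DMAcyclic G A B M)
    (hfp : (G.induce (Vplus G A B M)).IsAcyclic)
    (hfm : (G.induce (Vminus G A B M)).IsAcyclic)
    (M' : Set (Sym2 V)) (hM' : IsMaximumMatching G M') (hx : EdgeExchange G A B M M') :
    DMAcyclic G A B M' := by
  classical
  intro v hv
  obtain ⟨hAB, -, hAdj⟩ := hbip
  have hd : ∀ {x : V}, x ∈ A → x ∉ B := fun hx => Set.disjoint_left.mp hAB hx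
  obtain ⟨w, C, hC, hCd⟩ := exists_dir_cycle (fun u v h => h.1)
    (fun u v h1 h2 => by
      rcases h1.2 with ⟨ha, hb, hm⟩ | ⟨ha, hb, hm⟩ <;>
        rcases h2.2 with ⟨ha', hb', hm'⟩ | ⟨ha', hb', hm'⟩
      · exact hd ha hb'
      · exact hm (Sym2.eq_swap ▸ hm')
      · exact hm' (Sym2.eq_swap ▸ hm)
      · exact hd hb ha') hv
  rcases hx with ⟨a, a', b', haA, haM, he2, hadjab', hMdef⟩ |
    ⟨b, a', b', hbB, hbM, he2, hadja'b, hMdef⟩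
  · -- A-side exchange: e1 = s(a, b') new matching edge, e2 = s(a', b') removed
    have hb'B : b' ∈ B := by
      rcases hAdj hadjab' with ⟨h1, h2⟩ | ⟨h1, h2⟩
      · exact h2
      · exact absurd h1 (hd haA)
    have hedge : G.Adj a' b' := (SimpleGraph.mem_edgeSet G).mp (hM.1.1 he2)
    have ha'A : a' ∈ A := by
      rcases hAdj hedge with ⟨h1, h2⟩ | ⟨h1, h2⟩
      · exact h1
      · exact absurd hb'B (fun hb => hd h2 hb)
    have hana' : a ≠ a' := fun h => haM ⟨_, he2, by rw [h]; exact Sym2.mem_mk_left _ _⟩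
    have hab'ne : a ≠ b' := fun h => hd haA (h ▸ hb'B)
    have ha'b' : a' ≠ b' := fun h => hd ha'A (h ▸ hb'B)
    have he1M' : s(a, b') ∈ M' := by rw [hMdef]; exact Or.inr rfl
    have hmemiff : ∀ e : Sym2 V, e ≠ s(a, b') → e ≠ s(a', b') → (e ∈ M' ↔ e ∈ M) := by
      intro e h1 h2
      rw [hMdef]
      simp only [Set.mem_union, Set.mem_diff, Set.mem_singleton_iff, h1, h2, or_false,
        not_false_iff, and_true]
    -- a' is not covered by M'
    have ha'M' : a' ∉ matVerts M' := by
      rintro ⟨e, heM', ha'e⟩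
      rw [hMdef] at heM'
      rcases heM' with ⟨heM, hne⟩ | he
      · exact hM.1.2 e heM _ he2 (by simpa using hne) a' ha'e (Sym2.mem_mk_left _ _)
      · rw [Set.mem_singleton_iff] at he
        subst he
        rcases Sym2.mem_iff.mp ha'e with h | h
        · exact hana' h.symm
        · exact ha'b' h
    -- a' is not on the cycle, hence the edge s(a',b') is not on the cycle
    have ha'nC : a' ∉ C.support := by
      intro h
      obtain ⟨d, hdm, hds⟩ := exists_in_dart C hC.not_nil h
      rcases (hCd d hdm).2 with ⟨h1, h2, h3⟩ | ⟨h1, h2, h3⟩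
      · exact hd ha'A (hds ▸ h2)
      · exact ha'M' ⟨_, h3, Sym2.mem_iff.mpr (Or.inr hds.symm)⟩
    have he2nC : s(a', b') ∉ C.edges := fun h => ha'nC (C.fst_mem_support_of_mem_edges h)
    -- any arc of D(M') on the edge s(a,b') is the dart (b', a)
    have hforce : ∀ x y : V, DMarc G A B M' x y → s(x, y) = s(a, b') → x = b' ∧ y = a := by
      intro x y hxy he
      rcases Sym2.eq_iff.mp he with ⟨h1, h2⟩ | ⟨h1, h2⟩
      · subst h1; subst h2
        rcases hxy.2 with ⟨-, -, h3⟩ | ⟨h1, -, -⟩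
        · exact absurd he1M' h3
        · exact absurd h1 (hd haA)
      · exact ⟨h1, h2⟩
    by_cases he1C : s(a, b') ∈ C.edges
    · -- the cycle uses the new matching edge: it lives in V⁺(M)
      obtain ⟨d0, hd0m, hd0e⟩ := by
        have hedef : C.edges = C.darts.map SimpleGraph.Dart.edge := rfl
        rw [hedef] at he1C
        exact List.mem_map.mp he1C
      have hf := hforce d0.fst d0.snd (hCd d0 hd0m) hd0e
      have haC : a ∈ C.support := by
        have := C.dart_snd_mem_support_of_mem_darts hd0m
        rwa [hf.2] at this
      set r : V → V → Prop := fun x y => DMarc G A B M x y ∨ (x = b' ∧ y = a) with hrdef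
      have hall : ∀ d ∈ C.darts, r d.fst d.snd := by
        intro d hdm
        by_cases he : s(d.fst, d.snd) = s(a, b')
        · exact Or.inr (hforce _ _ (hCd d hdm) he)
        · have hne2' : s(d.fst, d.snd) ≠ s(a', b') := fun hh =>
            he2nC (hh ▸ dart_edge_mem hdm)
          refine Or.inl ⟨(hCd d hdm).1, ?_⟩
          rcases (hCd d hdm).2 with ⟨h1, h2, h3⟩ | ⟨h1, h2, h3⟩
          · exact Or.inl ⟨h1, h2, fun hh => h3 ((hmemiff _ he hne2').mpr hh)⟩
          · exact Or.inr ⟨h1, h2, (hmemiff _ he hne2').mp h3⟩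
      have hsub : ∀ x ∈ C.support, x ∈ Vplus G A B M := by
        intro x hxC
        have h1 : Relation.ReflTransGen r a w := (walk_rtg C hall a haC).2
        have h2 : Relation.ReflTransGen r w x := (walk_rtg C hall x hxC).1
        have hax : Relation.ReflTransGen r a x := h1.trans h2
        clear h1 h2 hxC
        induction hax with
        | refl => exact ⟨a, haA, haM, Relation.ReflTransGen.refl⟩
        | tail hseg hst ih =>
          rcases hst with hDM | ⟨-, heq⟩
          · obtain ⟨a0, ha0A, ha0M, hreach⟩ := ih
            exact ⟨a0, ha0A, ha0M, hreach.tail hDM⟩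
          · rw [heq]; exact ⟨a, haA, haM, Relation.ReflTransGen.refl⟩
      exact no_cycle_in_set hfp C hC hsub
    · -- the cycle avoids both modified edges: it is a cycle of D(M)
      have hall : ∀ d ∈ C.darts, DMarc G A B M d.fst d.snd := by
        intro d hdm
        have hne1 : s(d.fst, d.snd) ≠ s(a, b') := fun hh => he1C (hh ▸ dart_edge_mem hdm)
        have hne2 : s(d.fst, d.snd) ≠ s(a', b') := fun hh => he2nC (hh ▸ dart_edge_mem hdm)
        refine ⟨(hCd d hdm).1, ?_⟩
        rcases (hCd d hdm).2 with ⟨h1, h2, h3⟩ | ⟨h1, h2, h3⟩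
        · exact Or.inl ⟨h1, h2, fun hh => h3 ((hmemiff _ hne1 hne2).mpr hh)⟩
        · exact Or.inr ⟨h1, h2, (hmemiff _ hne1 hne2).mp h3⟩
      exact hacyc w (walk_tg C hall hC.not_nil)
  · -- B-side exchange: e1 = s(a', b) new matching edge, e2 = s(a', b') removed
    have ha'A : a' ∈ A := by
      rcases hAdj hadja'b with ⟨h1, h2⟩ | ⟨h1, h2⟩
      · exact h1
      · exact absurd hbB (fun hb => hd h2 hb)
    have hedge : G.Adj a' b' := (SimpleGraph.mem_edgeSet G).mp (hM.1.1 he2)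
    have hb'B : b' ∈ B := by
      rcases hAdj hedge with ⟨h1, h2⟩ | ⟨h1, h2⟩
      · exact h2
      · exact absurd h1 (hd ha'A)
    have hbb' : b ≠ b' := fun h => hbM ⟨_, he2, by rw [h]; exact Sym2.mem_mk_right _ _⟩
    have hba' : b ≠ a' := fun h => hd ha'A (h ▸ hbB)
    have ha'b' : a' ≠ b' := fun h => hd ha'A (h ▸ hb'B)
    have he1M' : s(a', b) ∈ M' := by rw [hMdef]; exact Or.inr rfl
    have hmemiff : ∀ e : Sym2 V, e ≠ s(a', b) → e ≠ s(a', b') → (e ∈ M' ↔ e ∈ M) := by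
      intro e h1 h2
      rw [hMdef]
      simp only [Set.mem_union, Set.mem_diff, Set.mem_singleton_iff, h1, h2, or_false,
        not_false_iff, and_true]
    -- b' is not covered by M'
    have hb'M' : b' ∉ matVerts M' := by
      rintro ⟨e, heM', hb'e⟩
      rw [hMdef] at heM'
      rcases heM' with ⟨heM, hne⟩ | he
      · exact hM.1.2 e heM _ he2 (by simpa using hne) b' hb'e (Sym2.mem_mk_right _ _)
      · rw [Set.mem_singleton_iff] at he
        subst he
        rcases Sym2.mem_iff.mp hb'e with h | h
        · exact ha'b' h.symm
        · exact hbb' h.symm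
    -- b' is not on the cycle, hence the edge s(a',b') is not on the cycle
    have hb'nC : b' ∉ C.support := by
      intro h
      obtain ⟨d, hdm, hds⟩ := exists_out_dart C hC.not_nil h
      rcases (hCd d hdm).2 with ⟨h1, h2, h3⟩ | ⟨h1, h2, h3⟩
      · exact hd (hds ▸ h1) hb'B
      · exact hb'M' ⟨_, h3, Sym2.mem_iff.mpr (Or.inl hds.symm)⟩
    have he2nC : s(a', b') ∉ C.edges := fun h => hb'nC (C.snd_mem_support_of_mem_edges h)
    -- any arc of D(M') on the edge s(a',b) is the dart (b, a')
    have hforce : ∀ x y : V, DMarc G A B M' x y → s(x, y) = s(a', b) → x = b ∧ y = a' := by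
      intro x y hxy he
      rcases Sym2.eq_iff.mp he with ⟨h1, h2⟩ | ⟨h1, h2⟩
      · subst h1; subst h2
        rcases hxy.2 with ⟨-, -, h3⟩ | ⟨h1, -, -⟩
        · exact absurd he1M' h3
        · exact absurd h1 (hd ha'A)
      · exact ⟨h1, h2⟩
    by_cases he1C : s(a', b) ∈ C.edges
    · -- the cycle uses the new matching edge: it lives in V⁻(M)
      obtain ⟨d0, hd0m, hd0e⟩ := by
        have hedef : C.edges = C.darts.map SimpleGraph.Dart.edge := rfl
        rw [hedef] at he1C
        exact List.mem_map.mp he1C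
      have hf := hforce d0.fst d0.snd (hCd d0 hd0m) hd0e
      have hbC : b ∈ C.support := by
        have := C.dart_fst_mem_support_of_mem_darts hd0m
        rwa [hf.1] at this
      set r : V → V → Prop := fun x y => DMarc G A B M x y ∨ (x = b ∧ y = a') with hrdef
      have hall : ∀ d ∈ C.darts, r d.fst d.snd := by
        intro d hdm
        by_cases he : s(d.fst, d.snd) = s(a', b)
        · exact Or.inr (hforce _ _ (hCd d hdm) he)
        · have hne2' : s(d.fst, d.snd) ≠ s(a', b') := fun hh =>
            he2nC (hh ▸ dart_edge_mem hdm)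
          refine Or.inl ⟨(hCd d hdm).1, ?_⟩
          rcases (hCd d hdm).2 with ⟨h1, h2, h3⟩ | ⟨h1, h2, h3⟩
          · exact Or.inl ⟨h1, h2, fun hh => h3 ((hmemiff _ he hne2').mpr hh)⟩
          · exact Or.inr ⟨h1, h2, (hmemiff _ he hne2').mp h3⟩
      have hsub : ∀ x ∈ C.support, x ∈ Vminus G A B M := by
        intro x hxC
        have h1 : Relation.ReflTransGen r x w := (walk_rtg C hall x hxC).2
        have h2 : Relation.ReflTransGen r w b := (walk_rtg C hall b hbC).1
        have hxb : Relation.ReflTransGen r x b := h1.trans h2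
        clear h1 h2 hxC
        induction hxb using Relation.ReflTransGen.head_induction_on with
        | refl => exact ⟨b, hbB, hbM, Relation.ReflTransGen.refl⟩
        | head hst hrest ih =>
          rcases hst with hDM | ⟨heq, -⟩
          · obtain ⟨b0, hb0B, hb0M, hreach⟩ := ih
            exact ⟨b0, hb0B, hb0M, Relation.ReflTransGen.head hDM hreach⟩
          · rw [heq]; exact ⟨b, hbB, hbM, Relation.ReflTransGen.refl⟩
      exact no_cycle_in_set hfm C hC hsub
    · -- the cycle avoids both modified edges: it is a cycle of D(M)
      have hall : ∀ d ∈ C.darts, DMarc G A B M d.fst d.snd := by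
        intro d hdm
        have hne1 : s(d.fst, d.snd) ≠ s(a', b) := fun hh => he1C (hh ▸ dart_edge_mem hdm)
        have hne2 : s(d.fst, d.snd) ≠ s(a', b') := fun hh => he2nC (hh ▸ dart_edge_mem hdm)
        refine ⟨(hCd d hdm).1, ?_⟩
        rcases (hCd d hdm).2 with ⟨h1, h2, h3⟩ | ⟨h1, h2, h3⟩
        · exact Or.inl ⟨h1, h2, fun hh => h3 ((hmemiff _ hne1 hne2).mpr hh)⟩
        · exact Or.inr ⟨h1, h2, (hmemiff _ hne1 hne2).mp h3⟩
      exact hacyc w (walk_tg C hall hC.not_nil)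
end

section
/- If M is a maximum matching in a bipartite graph G and M' = M Δ E(C) for an M-alternating cycle C of G, then M' is also a maximum matching, the uncovered vertex sets on each side are unchanged (A_0(M') = A_0(M), B_0(M') = B_0(M)), and V^+(M') = V^+(M), V^-(M') = V^-(M). -/
variable {V : Type*}

section AuxHelpers

open Relation SimpleGraph

variable {G : SimpleGraph V} {A B : Set V} {N : Set (Sym2 V)}

private lemma walk_edges_getElem {u v : V} (p : G.Walk u v) (i : ℕ) (h : i < p.edges.length) :
    p.edges[i] = s(p.getVert i, p.getVert (i+1)) := by
  induction p generalizing i with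
  | nil => simp at h
  | cons hadj q ih =>
    cases i with
    | zero => simp
    | succ n => simpa using ih n (by simpa using h)

private lemma walk_support_getElem {u v : V} (p : G.Walk u v) (i : ℕ)
    (h : i < p.support.length) : p.support[i] = p.getVert i := by
  induction p generalizing i with
  | nil =>
    simp only [Walk.support_nil, List.length_singleton] at h
    interval_cases i
    simp
  | cons hadj q ih =>
    cases i with
    | zero => simp
    | succ n => simpa using ih n (by simpa using h)

private lemma cycle_getVert_inj {v : V} {c : G.Walk v v} (hc : c.IsCycle) :
    ∀ i < c.length, ∀ j < c.length, c.getVert i = c.getVert j → i = j := by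
  have hnd := hc.2
  have hsl : c.support.length = c.length + 1 := c.length_support
  have htl : c.support.tail.length = c.length := by
    rw [List.length_tail, hsl]
    omega
  have key : ∀ i, 1 ≤ i → i ≤ c.length → ∀ j, 1 ≤ j → j ≤ c.length →
      c.getVert i = c.getVert j → i = j := by
    intro i hi1 hi2 j hj1 hj2 heq
    have h1 : c.support.tail[i-1]'(by omega) = c.getVert i := by
      rw [List.getElem_tail, walk_support_getElem c (i-1+1) (by omega)]
      congr 1
      omega
    have h2 : c.support.tail[j-1]'(by omega) = c.getVert j := by
      rw [List.getElem_tail, walk_support_getElem c (j-1+1) (by omega)]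
      congr 1
      omega
    have h3 : c.support.tail[i-1]'(by omega) = c.support.tail[j-1]'(by omega) :=
      h1.trans (heq.trans h2.symm)
    have := (hnd.getElem_inj_iff).mp h3
    omega
  have h0n : c.getVert 0 = c.getVert c.length := by
    rw [c.getVert_zero, c.getVert_length]
  have h3 : 3 ≤ c.length := hc.three_le_length
  intro i hi j hj heq
  rcases Nat.eq_zero_or_pos i with hi0 | hi0 <;> rcases Nat.eq_zero_or_pos j with hj0 | hj0
  · omega
  · subst hi0
    rw [h0n] at heq
    have := key c.length (by omega) le_rfl j (by omega) (by omega) heq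
    omega
  · subst hj0
    rw [h0n] at heq
    have := key i (by omega) (by omega) c.length (by omega) le_rfl heq
    omega
  · exact key i (by omega) (by omega) j (by omega) (by omega) heq

private lemma alt_facts {v : V} {c : G.Walk v v} {M : Set (Sym2 V)}
    (hc : IsAlternatingCycle G M c) :
    (∀ i, i+1 < c.length →
      (s(c.getVert i, c.getVert (i+1)) ∈ M ↔ s(c.getVert (i+1), c.getVert (i+2)) ∉ M)) ∧
    (s(c.getVert (c.length - 1), c.getVert (c.length - 1 + 1)) ∈ M ↔
      s(c.getVert 0, c.getVert 1) ∉ M) := by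
  have h3 : 3 ≤ c.length := hc.1.three_le_length
  have hlen : c.edges.length = c.length := c.length_edges
  have hl' : (c.edges ++ c.edges.take 1).length = c.length + 1 := by
    simp [hlen]; omega
  have hch := List.isChain_iff_getElem.mp hc.2
  have hget : ∀ i (h : i < c.length), (c.edges ++ c.edges.take 1)[i]'(by omega) =
      s(c.getVert i, c.getVert (i+1)) := by
    intro i h
    rw [List.getElem_append_left (by omega)]
    exact walk_edges_getElem c i (by omega)
  constructor
  · intro i hi
    have := hch i (by omega)
    rwa [hget i (by omega), hget (i+1) (by omega)] at this
  · have := hch (c.length - 1) (by omega)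
    rw [hget (c.length - 1) (by omega)] at this
    have hlast : (c.edges ++ c.edges.take 1)[c.length - 1 + 1]'(by omega) =
        s(c.getVert 0, c.getVert 1) := by
      have he : c.length - 1 + 1 = c.length := by omega
      rw [List.getElem_append_right (by omega)]
      simp only [hlen, he]
      have h0 : c.length - c.length = 0 := by omega
      simp only [List.getElem_take, h0]
      exact walk_edges_getElem c 0 (by omega)
    rwa [hlast] at this

private lemma arc_total (hbip : IsBipartition G A B) {x y : V} (h : G.Adj x y) :
    DMarc G A B N x y ∨ DMarc G A B N y x := by
  rcases hbip.2.2 h with ⟨hA, hB⟩ | ⟨hB, hA⟩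
  · by_cases hm : s(x, y) ∈ N
    · exact Or.inr ⟨h.symm, Or.inr ⟨hB, hA, by rwa [Sym2.eq_swap]⟩⟩
    · exact Or.inl ⟨h, Or.inl ⟨hA, hB, hm⟩⟩
  · by_cases hm : s(x, y) ∈ N
    · exact Or.inl ⟨h, Or.inr ⟨hB, hA, hm⟩⟩
    · exact Or.inr ⟨h.symm, Or.inl ⟨hA, hB, by rwa [Sym2.eq_swap]⟩⟩

private lemma arc_step1 (hbip : IsBipartition G A B) {u w z : V} (h2 : G.Adj w z)
    (hm : s(u, w) ∈ N ↔ s(w, z) ∉ N) (h : DMarc G A B N u w) : DMarc G A B N w z := by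
  have hdisj := Set.disjoint_left.mp hbip.1
  rcases h.2 with ⟨hA, hB, hnm⟩ | ⟨hB, hA, hm'⟩
  · have hz : z ∈ A := by
      rcases hbip.2.2 h2 with ⟨h1, _⟩ | ⟨_, h1⟩
      · exact absurd h1 (fun h' => hdisj h' hB)
      · exact h1
    refine ⟨h2, Or.inr ⟨hB, hz, ?_⟩⟩
    by_contra hcon
    exact hnm (hm.mpr hcon)
  · have hz : z ∈ B := by
      rcases hbip.2.2 h2 with ⟨_, h1⟩ | ⟨h1, _⟩
      · exact h1
      · exact absurd h1 (fun h' => hdisj hA h')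
    exact ⟨h2, Or.inl ⟨hA, hz, hm.mp hm'⟩⟩

private lemma arc_step2 (hbip : IsBipartition G A B) {u w z : V}
    (hm : s(u, w) ∈ N ↔ s(w, z) ∉ N) (h : DMarc G A B N w u) : ¬ DMarc G A B N w z := by
  have hdisj := Set.disjoint_left.mp hbip.1
  rintro ⟨hadj, ⟨hwA, hzB, hnm⟩ | ⟨hwB, hzA, hm'⟩⟩
  · rcases h.2 with ⟨_, _, hnm'⟩ | ⟨hwB, _, _⟩
    · rw [Sym2.eq_swap] at hnm'
      exact hnm' (hm.mpr hnm)
    · exact hdisj hwA hwB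
  · rcases h.2 with ⟨hwA, _, _⟩ | ⟨_, _, hm''⟩
    · exact hdisj hwA hwB
    · rw [Sym2.eq_swap] at hm''
      exact (hm.mp hm'') hm'

private lemma chain_reach {R : V → V → Prop} {f : ℕ → V} {n : ℕ}
    (h : ∀ i < n, R (f i) (f (i+1))) :
    ∀ j ≤ n, ∀ i ≤ j, ReflTransGen R (f i) (f j) := by
  intro j
  induction j with
  | zero => intro _ i hi; interval_cases i; exact ReflTransGen.refl
  | succ m ih =>
    intro hm i hi
    rcases Nat.lt_or_ge i (m+1) with h' | h'
    · exact ReflTransGen.tail (ih (by omega) i (by omega)) (h m (by omega))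
    · have : i = m + 1 := by omega
      subst this; exact ReflTransGen.refl

private lemma cyc_reach {R : V → V → Prop} {f : ℕ → V} {n : ℕ} (hf : f n = f 0)
    (h : ∀ i < n, R (f i) (f (i+1))) :
    ∀ i ≤ n, ∀ j ≤ n, ReflTransGen R (f i) (f j) := by
  intro i hi j hj
  rcases le_or_gt i j with h' | h'
  · exact chain_reach h j hj i h'
  · have h1 : ReflTransGen R (f i) (f n) := chain_reach h n le_rfl i hi
    have h2 : ReflTransGen R (f 0) (f j) := chain_reach h j hj 0 (by omega)
    rw [hf] at h1
    exact h1.trans h2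

private lemma cyc_mutual_reach (hbip : IsBipartition G A B)
    {f : ℕ → V} {n : ℕ} (hf : f n = f 0)
    (hadj : ∀ i < n, G.Adj (f i) (f (i+1)))
    (halt : ∀ i, i + 1 < n → (s(f i, f (i+1)) ∈ N ↔ s(f (i+1), f (i+2)) ∉ N)) :
    ∀ i ≤ n, ∀ j ≤ n, ReflTransGen (DMarc G A B N) (f i) (f j) := by
  have hdir : ∀ i < n, (DMarc G A B N (f 0) (f 1) ↔ DMarc G A B N (f i) (f (i+1))) := by
    intro i
    induction i with
    | zero => intro _; rfl
    | succ m ih =>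
      intro hm
      refine (ih (by omega)).trans ?_
      constructor
      · exact fun h => arc_step1 hbip (hadj (m+1) hm) (halt m hm) h
      · intro h
        by_contra hcon
        have := (arc_total hbip (hadj m (by omega))).resolve_left hcon
        exact arc_step2 hbip (halt m hm) this h
  by_cases hQ : DMarc G A B N (f 0) (f 1)
  · exact cyc_reach hf (fun i hi => (hdir i hi).mp hQ)
  · have hB : ∀ i < n, DMarc G A B N (f (i+1)) (f i) := by
      intro i hi
      exact (arc_total hbip (hadj i hi)).resolve_left (fun h => hQ ((hdir i hi).mpr h))
    intro i hi j hj
    have key := cyc_reach (R := DMarc G A B N) (f := fun k => f (n - k)) (n := n)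
      (by simp [hf]) (fun i hi => by
        have := hB (n - i - 1) (by omega)
        have he : n - i - 1 + 1 = n - i := by omega
        rw [he] at this
        simpa [Nat.sub_sub] using this) (n - i) (by omega) (n - j) (by omega)
    rwa [show n - (n - i) = i by omega, show n - (n - j) = j by omega] at key

private lemma rtg_mono {R S : V → V → Prop} (h : ∀ a b, R a b → ReflTransGen S a b)
    {x y : V} (hr : ReflTransGen R x y) : ReflTransGen S x y := by
  induction hr with
  | refl => exact ReflTransGen.refl
  | tail _ h2 ih => exact ih.trans (h _ _ h2)

end AuxHelpers

private lemma iff_flip {p q : Prop} (h : p ↔ ¬ q) : q ↔ ¬ p := by tauto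

section CycleHelpers

open Relation SimpleGraph

variable {G : SimpleGraph V} {A B : Set V}

private lemma opposite {v : V} {c : G.Walk v v} {M : Set (Sym2 V)}
    (hc : IsAlternatingCycle G M c) :
    ∀ i < c.length, ∀ j < c.length, i ≠ j → ∀ x : V,
      x ∈ (s(c.getVert i, c.getVert (i+1)) : Sym2 V) →
      x ∈ (s(c.getVert j, c.getVert (j+1)) : Sym2 V) →
      (s(c.getVert i, c.getVert (i+1)) ∈ M ↔ s(c.getVert j, c.getVert (j+1)) ∉ M) := by
  have hinj := cycle_getVert_inj hc.1
  have halt := (alt_facts hc).1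
  have hwrap := (alt_facts hc).2
  have h3 : 3 ≤ c.length := hc.1.three_le_length
  have h0n : c.getVert 0 = c.getVert c.length := by
    rw [c.getVert_zero, c.getVert_length]
  have incid : ∀ i, i < c.length → ∀ x : V,
      x ∈ (s(c.getVert i, c.getVert (i+1)) : Sym2 V) →
      x = c.getVert i ∨ (i+1 < c.length ∧ x = c.getVert (i+1)) ∨
        (i+1 = c.length ∧ x = c.getVert 0) := by
    intro i hi x hx
    rcases Sym2.mem_iff.mp hx with h | h
    · exact Or.inl h
    · rcases Nat.lt_or_ge (i+1) c.length with h' | h'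
      · exact Or.inr (Or.inl ⟨h', h⟩)
      · have he : i + 1 = c.length := by omega
        refine Or.inr (Or.inr ⟨he, ?_⟩)
        rw [h, he, ← h0n]
  intro i hi j hj hne x hxi hxj
  rcases incid i hi x hxi with h1 | ⟨h1l, h1⟩ | ⟨h1l, h1⟩ <;>
    rcases incid j hj x hxj with h2 | ⟨h2l, h2⟩ | ⟨h2l, h2⟩
  · exact absurd (hinj i hi j hj (h1.symm.trans h2)) hne
  · have hij : i = j + 1 := hinj i hi (j+1) h2l (h1.symm.trans h2)
    subst hij
    have := halt j h2l
    rw [show j + 2 = j + 1 + 1 from rfl] at this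
    exact iff_flip this
  · have hi0 : i = 0 := hinj i hi 0 (by omega) (h1.symm.trans h2)
    subst hi0
    have hj' : j = c.length - 1 := by omega
    subst hj'
    exact iff_flip hwrap
  · have hij : j = i + 1 := hinj j hj (i+1) h1l (h2.symm.trans h1)
    subst hij
    exact halt i h1l
  · have := hinj (i+1) h1l (j+1) h2l (h1.symm.trans h2)
    omega
  · have := hinj (i+1) h1l 0 (by omega) (h1.symm.trans h2)
    omega
  · have hj0 : j = 0 := hinj j hj 0 (by omega) (h2.symm.trans h1)
    subst hj0
    have hi' : i = c.length - 1 := by omega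
    subst hi'
    exact hwrap
  · have := hinj (j+1) h2l 0 (by omega) (h2.symm.trans h1)
    omega
  · omega

private lemma cover_aux {v : V} {c : G.Walk v v} {M : Set (Sym2 V)}
    (hc : IsAlternatingCycle G M c) (x : V) (k : ℕ) (hk : k < c.length)
    (hkx : c.getVert k = x) :
    ∃ i, i < c.length ∧ ∃ j, j < c.length ∧
      x ∈ (s(c.getVert i, c.getVert (i+1)) : Sym2 V) ∧
      x ∈ (s(c.getVert j, c.getVert (j+1)) : Sym2 V) ∧
      s(c.getVert i, c.getVert (i+1)) ∈ M ∧ s(c.getVert j, c.getVert (j+1)) ∉ M := by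
  have h3 : 3 ≤ c.length := hc.1.three_le_length
  have h0n : c.getVert 0 = c.getVert c.length := by
    rw [c.getVert_zero, c.getVert_length]
  have hxa : x ∈ (s(c.getVert k, c.getVert (k+1)) : Sym2 V) :=
    Sym2.mem_iff.mpr (Or.inl hkx.symm)
  by_cases hk0 : k = 0
  · subst hk0
    have hxb : x ∈ (s(c.getVert (c.length - 1), c.getVert (c.length - 1 + 1)) : Sym2 V) := by
      refine Sym2.mem_iff.mpr (Or.inr ?_)
      rw [show c.length - 1 + 1 = c.length from by omega, ← h0n]
      exact hkx.symm
    have hop := opposite hc (c.length - 1) (by omega) 0 (by omega) (by omega) x hxb hxa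
    by_cases hmem : s(c.getVert 0, c.getVert (0+1)) ∈ M
    · exact ⟨0, by omega, c.length - 1, by omega, hxa, hxb, hmem, fun h => (hop.mp h) hmem⟩
    · exact ⟨c.length - 1, by omega, 0, by omega, hxb, hxa, hop.mpr hmem, hmem⟩
  · have hxb : x ∈ (s(c.getVert (k - 1), c.getVert (k - 1 + 1)) : Sym2 V) := by
      refine Sym2.mem_iff.mpr (Or.inr ?_)
      rw [show k - 1 + 1 = k from by omega]
      exact hkx.symm
    have hop := opposite hc (k - 1) (by omega) k (by omega) (by omega) x hxb hxa
    by_cases hmem : s(c.getVert k, c.getVert (k+1)) ∈ M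
    · exact ⟨k, hk, k - 1, by omega, hxa, hxb, hmem, fun h => (hop.mp h) hmem⟩
    · exact ⟨k - 1, by omega, k, hk, hxb, hxa, hop.mpr hmem, hmem⟩

private lemma cover {v : V} {c : G.Walk v v} {M : Set (Sym2 V)}
    (hc : IsAlternatingCycle G M c) :
    ∀ x ∈ c.support, ∃ i, i < c.length ∧ ∃ j, j < c.length ∧
      x ∈ (s(c.getVert i, c.getVert (i+1)) : Sym2 V) ∧
      x ∈ (s(c.getVert j, c.getVert (j+1)) : Sym2 V) ∧
      s(c.getVert i, c.getVert (i+1)) ∈ M ∧ s(c.getVert j, c.getVert (j+1)) ∉ M := by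
  intro x hx
  have h3 : 3 ≤ c.length := hc.1.three_le_length
  have h0n : c.getVert 0 = c.getVert c.length := by
    rw [c.getVert_zero, c.getVert_length]
  obtain ⟨k, hkx, hk⟩ := SimpleGraph.Walk.mem_support_iff_exists_getVert.mp hx
  by_cases hkn : k = c.length
  · subst hkn
    rw [← h0n] at hkx
    exact cover_aux hc x 0 (by omega) hkx
  · exact cover_aux hc x k (by omega) hkx

end CycleHelpers

/-- Switching `M` along an `M`-alternating cycle `C` gives a maximum matching with
the same uncovered vertices on each side and the same `V⁺` and `V⁻`. -/
theorem stmt14 [Fintype V] (G : SimpleGraph V) (A B : Set V) (hbip : IsBipartition G A B)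
    (M : Set (Sym2 V)) (hM : IsMaximumMatching G M)
    (v : V) (c : G.Walk v v) (hc : IsAlternatingCycle G M c)
    (M' : Set (Sym2 V)) (hM'def : M' = symmDiff M {e | e ∈ c.edges}) :
    IsMaximumMatching G M' ∧
    A \ matVerts M' = A \ matVerts M ∧ B \ matVerts M' = B \ matVerts M ∧
    Vplus G A B M' = Vplus G A B M ∧ Vminus G A B M' = Vminus G A B M := by
  classical
  open Relation SimpleGraph in
  have h3 : 3 ≤ c.length := hc.1.three_le_length
  have halt := (alt_facts hc).1
  have hwrap := (alt_facts hc).2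
  have hlenE : c.edges.length = c.length := c.length_edges
  have hEmem : ∀ i, i < c.length → s(c.getVert i, c.getVert (i+1)) ∈ c.edges := by
    intro i hi
    have h := walk_edges_getElem c i (by omega)
    rw [← h]
    exact List.getElem_mem _
  have hmemE : ∀ e ∈ c.edges, ∃ i, i < c.length ∧ e = s(c.getVert i, c.getVert (i+1)) := by
    intro e he
    obtain ⟨i, hi, hie⟩ := List.mem_iff_getElem.mp he
    refine ⟨i, by omega, ?_⟩
    rw [← hie, walk_edges_getElem c i hi]
  have hM'C : ∀ e, e ∈ c.edges → (e ∈ M' ↔ e ∉ M) := by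
    intro e he
    rw [hM'def, Set.mem_symmDiff]
    simp only [Set.mem_setOf_eq, he]
    tauto
  have hM'nC : ∀ e, e ∉ c.edges → (e ∈ M' ↔ e ∈ M) := by
    intro e he
    rw [hM'def, Set.mem_symmDiff]
    simp only [Set.mem_setOf_eq, he]
    tauto
  have hsupp : ∀ (x : V) (i : ℕ), i < c.length →
      x ∈ (s(c.getVert i, c.getVert (i+1)) : Sym2 V) → x ∈ c.support := by
    intro x i hi hx
    rcases Sym2.mem_iff.mp hx with h | h
    · exact SimpleGraph.Walk.mem_support_iff_exists_getVert.mpr ⟨i, h.symm, by omega⟩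
    · exact SimpleGraph.Walk.mem_support_iff_exists_getVert.mpr ⟨i+1, h.symm, by omega⟩
  have hcov := cover hc
  have hmv : matVerts M' = matVerts M := by
    ext x
    constructor
    · rintro ⟨e, heM', hxe⟩
      by_cases heC : e ∈ c.edges
      · obtain ⟨i, hi, hei⟩ := hmemE e heC
        rw [hei] at hxe
        obtain ⟨i', hi', j', hj', hxi', hxj', hi'M, hj'M⟩ := hcov x (hsupp x i hi hxe)
        exact ⟨_, hi'M, hxi'⟩
      · exact ⟨e, (hM'nC e heC).mp heM', hxe⟩
    · rintro ⟨e, heM, hxe⟩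
      by_cases heC : e ∈ c.edges
      · obtain ⟨i, hi, hei⟩ := hmemE e heC
        rw [hei] at hxe
        obtain ⟨i', hi', j', hj', hxi', hxj', hi'M, hj'M⟩ := hcov x (hsupp x i hi hxe)
        exact ⟨_, (hM'C _ (hEmem j' hj')).mpr hj'M, hxj'⟩
      · exact ⟨e, (hM'nC e heC).mpr heM, hxe⟩
  have hmatch' : IsMatchingSet G M' := by
    constructor
    · intro e he
      by_cases heC : e ∈ c.edges
      · exact c.edges_subset_edgeSet heC
      · exact hM.1.1 ((hM'nC e heC).mp he)
    · intro e heM' f hfM' hne x hxe hxf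
      by_cases heC : e ∈ c.edges <;> by_cases hfC : f ∈ c.edges
      · have heM : e ∉ M := (hM'C e heC).mp heM'
        have hfM : f ∉ M := (hM'C f hfC).mp hfM'
        obtain ⟨i, hi, hei⟩ := hmemE e heC
        obtain ⟨j, hj, hfj⟩ := hmemE f hfC
        have hij : i ≠ j := fun h => hne (by rw [hei, hfj, h])
        have hop := opposite hc i hi j hj hij x (hei ▸ hxe) (hfj ▸ hxf)
        rw [← hei, ← hfj] at hop
        exact heM (hop.mpr hfM)
      · have hfM : f ∈ M := (hM'nC f hfC).mp hfM'
        obtain ⟨i, hi, hei⟩ := hmemE e heC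
        obtain ⟨i', hi', j', hj', hxi', hxj', hi'M, hj'M⟩ :=
          hcov x (hsupp x i hi (hei ▸ hxe))
        have hne' : f ≠ s(c.getVert i', c.getVert (i'+1)) :=
          fun h => hfC (h ▸ hEmem i' hi')
        exact hM.1.2 f hfM _ hi'M hne' x hxf hxi'
      · have heM : e ∈ M := (hM'nC e heC).mp heM'
        obtain ⟨j, hj, hfj⟩ := hmemE f hfC
        obtain ⟨i', hi', j', hj', hxi', hxj', hi'M, hj'M⟩ :=
          hcov x (hsupp x j hj (hfj ▸ hxf))
        have hne' : e ≠ s(c.getVert i', c.getVert (i'+1)) :=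
          fun h => heC (h ▸ hEmem i' hi')
        exact hM.1.2 e heM _ hi'M hne' x hxe hxi'
      · exact hM.1.2 e ((hM'nC e heC).mp heM') f ((hM'nC f hfC).mp hfM') hne x hxe hxf
  -- cardinality
  have hinj := cycle_getVert_inj hc.1
  have hEinj : ∀ i, i < c.length → ∀ j, j < c.length →
      s(c.getVert i, c.getVert (i+1)) = s(c.getVert j, c.getVert (j+1)) → i = j := by
    intro i hi j hj h
    have h1 : c.edges[i]'(by omega) = c.edges[j]'(by omega) := by
      rw [walk_edges_getElem c i (by omega), walk_edges_getElem c j (by omega)]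
      exact h
    exact (hc.1.edges_nodup.getElem_inj_iff).mp h1
  set S := (Finset.range c.length).filter
    (fun i => s(c.getVert i, c.getVert (i+1)) ∈ M) with hS
  set T := (Finset.range c.length).filter
    (fun i => s(c.getVert i, c.getVert (i+1)) ∉ M) with hT
  have hσspec : ∀ i, i < c.length →
      (s(c.getVert ((i+1) % c.length), c.getVert ((i+1) % c.length + 1)) ∈ M ↔
        s(c.getVert i, c.getVert (i+1)) ∉ M) := by
    intro i hi
    rcases Nat.lt_or_ge (i+1) c.length with h | h
    · rw [Nat.mod_eq_of_lt h]
      have h' := halt i h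
      rw [show i + 2 = i + 1 + 1 from rfl] at h'
      exact iff_flip h'
    · have hi' : i = c.length - 1 := by omega
      subst hi'
      rw [show (c.length - 1 + 1) % c.length = 0 from by
        rw [show c.length - 1 + 1 = c.length from by omega, Nat.mod_self]]
      exact iff_flip hwrap
  have hσinj : ∀ i ∈ Finset.range c.length, ∀ j ∈ Finset.range c.length,
      (i+1) % c.length = (j+1) % c.length → i = j := by
    intro i hi j hj h
    rw [Finset.mem_range] at hi hj
    rcases Nat.lt_or_ge (i+1) c.length with h1 | h1 <;>
      rcases Nat.lt_or_ge (j+1) c.length with h2 | h2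
    · rw [Nat.mod_eq_of_lt h1, Nat.mod_eq_of_lt h2] at h; omega
    · rw [Nat.mod_eq_of_lt h1, show j + 1 = c.length from by omega, Nat.mod_self] at h; omega
    · rw [Nat.mod_eq_of_lt h2, show i + 1 = c.length from by omega, Nat.mod_self] at h; omega
    · omega
  have hST : S.card = T.card := by
    have hmapST : ∀ i ∈ S, (i+1) % c.length ∈ T := by
      intro i hi
      rw [hS, Finset.mem_filter, Finset.mem_range] at hi
      rw [hT, Finset.mem_filter, Finset.mem_range]
      refine ⟨Nat.mod_lt _ (by omega), fun h => (hσspec i hi.1).mp h hi.2⟩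
    have hmapTS : ∀ i ∈ T, (i+1) % c.length ∈ S := by
      intro i hi
      rw [hT, Finset.mem_filter, Finset.mem_range] at hi
      rw [hS, Finset.mem_filter, Finset.mem_range]
      exact ⟨Nat.mod_lt _ (by omega), (hσspec i hi.1).mpr hi.2⟩
    refine le_antisymm ?_ ?_
    · exact Finset.card_le_card_of_injOn _ hmapST (fun a ha b hb hab =>
        hσinj a (Finset.mem_of_mem_filter a ha) b (Finset.mem_of_mem_filter b hb) hab)
    · exact Finset.card_le_card_of_injOn _ hmapTS (fun a ha b hb hab =>
        hσinj a (Finset.mem_of_mem_filter a ha) b (Finset.mem_of_mem_filter b hb) hab)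
  set C : Set (Sym2 V) := {e | e ∈ c.edges} with hCdef
  have hCM : C ∩ M = (fun i => s(c.getVert i, c.getVert (i+1))) '' ↑S := by
    ext e
    constructor
    · rintro ⟨heC, heM⟩
      obtain ⟨i, hi, hei⟩ := hmemE e heC
      refine ⟨i, ?_, hei.symm⟩
      rw [hS]
      simp only [Finset.coe_filter, Finset.mem_range, Set.mem_setOf_eq]
      exact ⟨hi, hei ▸ heM⟩
    · rintro ⟨i, hiS, rfl⟩
      rw [hS] at hiS
      simp only [Finset.coe_filter, Finset.mem_range, Set.mem_setOf_eq] at hiS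
      exact ⟨hEmem i hiS.1, hiS.2⟩
  have hCdM : C \ M = (fun i => s(c.getVert i, c.getVert (i+1))) '' ↑T := by
    ext e
    constructor
    · rintro ⟨heC, heM⟩
      obtain ⟨i, hi, hei⟩ := hmemE e heC
      refine ⟨i, ?_, hei.symm⟩
      rw [hT]
      simp only [Finset.coe_filter, Finset.mem_range, Set.mem_setOf_eq]
      exact ⟨hi, hei ▸ heM⟩
    · rintro ⟨i, hiT, rfl⟩
      rw [hT] at hiT
      simp only [Finset.coe_filter, Finset.mem_range, Set.mem_setOf_eq] at hiT
      exact ⟨hEmem i hiT.1, hiT.2⟩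
  have hCMcard : (C ∩ M).ncard = S.card := by
    rw [hCM, Set.ncard_image_of_injOn, Set.ncard_coe_finset]
    intro a ha b hb hab
    rw [hS] at ha hb
    simp only [Finset.coe_filter, Finset.mem_range, Set.mem_setOf_eq] at ha hb
    exact hEinj a ha.1 b hb.1 hab
  have hCdMcard : (C \ M).ncard = T.card := by
    rw [hCdM, Set.ncard_image_of_injOn, Set.ncard_coe_finset]
    intro a ha b hb hab
    rw [hT] at ha hb
    simp only [Finset.coe_filter, Finset.mem_range, Set.mem_setOf_eq] at ha hb
    exact hEinj a ha.1 b hb.1 hab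
  have hsplitM : M = (M \ C) ∪ (C ∩ M) := by
    ext e
    simp only [Set.mem_union, Set.mem_diff, Set.mem_inter_iff]
    tauto
  have hsplitM' : M' = (M \ C) ∪ (C \ M) := by
    rw [hM'def]
    ext e
    simp only [Set.mem_symmDiff, Set.mem_union, Set.mem_diff]
    try tauto
  have hdisj1 : Disjoint (M \ C) (C ∩ M) := by
    rw [Set.disjoint_left]
    rintro e ⟨_, h2⟩ ⟨h3, _⟩
    exact h2 h3
  have hdisj2 : Disjoint (M \ C) (C \ M) := by
    rw [Set.disjoint_left]
    rintro e ⟨_, h2⟩ ⟨h3, _⟩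
    exact h2 h3
  have hMn : M.ncard = (M \ C).ncard + (C ∩ M).ncard := by
    rw [← Set.ncard_union_eq hdisj1 (Set.toFinite _) (Set.toFinite _), ← hsplitM]
  have hM'n : M'.ncard = (M \ C).ncard + (C \ M).ncard := by
    rw [← Set.ncard_union_eq hdisj2 (Set.toFinite _) (Set.toFinite _), ← hsplitM']
  have hcard : M'.ncard = M.ncard := by
    rw [hMn, hM'n, hCMcard, hCdMcard, hST]
  -- reachability
  have hadjf : ∀ i < c.length, G.Adj (c.getVert i) (c.getVert (i+1)) :=
    fun i hi => c.adj_getVert_succ hi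
  have hfn : c.getVert c.length = c.getVert 0 := by
    rw [c.getVert_length, c.getVert_zero]
  have cruxM : ∀ x y : V, s(x, y) ∈ c.edges → Relation.ReflTransGen (DMarc G A B M) x y := by
    intro x y he
    obtain ⟨i, hi, hei⟩ := hmemE _ he
    have mtl := cyc_mutual_reach (N := M) hbip hfn hadjf halt
    rcases Sym2.eq_iff.mp hei with ⟨hx, hy⟩ | ⟨hx, hy⟩
    · rw [hx, hy]
      exact mtl i (by omega) (i+1) (by omega)
    · rw [hx, hy]
      exact mtl (i+1) (by omega) i (by omega)
  have halt' : ∀ i, i + 1 < c.length →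
      (s(c.getVert i, c.getVert (i+1)) ∈ M' ↔ s(c.getVert (i+1), c.getVert (i+2)) ∉ M') := by
    intro i hi
    rw [hM'C (s(c.getVert i, c.getVert (i+1))) (hEmem i (by omega)),
      hM'C (s(c.getVert (i+1), c.getVert (i+2))) (hEmem (i+1) (by omega))]
    have := halt i hi
    tauto
  have cruxM' : ∀ x y : V, s(x, y) ∈ c.edges → Relation.ReflTransGen (DMarc G A B M') x y := by
    intro x y he
    obtain ⟨i, hi, hei⟩ := hmemE _ he
    have mtl := cyc_mutual_reach (N := M') hbip hfn hadjf halt'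
    rcases Sym2.eq_iff.mp hei with ⟨hx, hy⟩ | ⟨hx, hy⟩
    · rw [hx, hy]
      exact mtl i (by omega) (i+1) (by omega)
    · rw [hx, hy]
      exact mtl (i+1) (by omega) i (by omega)
  have arc1 : ∀ x y : V, DMarc G A B M' x y → Relation.ReflTransGen (DMarc G A B M) x y := by
    intro x y h
    by_cases hC : s(x, y) ∈ c.edges
    · exact cruxM x y hC
    · refine Relation.ReflTransGen.single ⟨h.1, ?_⟩
      rcases h.2 with ⟨h1, h2, hm⟩ | ⟨h1, h2, hm⟩
      · exact Or.inl ⟨h1, h2, fun hmm => hm ((hM'nC _ hC).mpr hmm)⟩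
      · exact Or.inr ⟨h1, h2, (hM'nC _ hC).mp hm⟩
  have arc2 : ∀ x y : V, DMarc G A B M x y → Relation.ReflTransGen (DMarc G A B M') x y := by
    intro x y h
    by_cases hC : s(x, y) ∈ c.edges
    · exact cruxM' x y hC
    · refine Relation.ReflTransGen.single ⟨h.1, ?_⟩
      rcases h.2 with ⟨h1, h2, hm⟩ | ⟨h1, h2, hm⟩
      · exact Or.inl ⟨h1, h2, fun hmm => hm ((hM'nC _ hC).mp hmm)⟩
      · exact Or.inr ⟨h1, h2, (hM'nC _ hC).mpr hm⟩
  have reach_iff : ∀ x y : V, Relation.ReflTransGen (DMarc G A B M') x y ↔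
      Relation.ReflTransGen (DMarc G A B M) x y :=
    fun x y => ⟨rtg_mono arc1, rtg_mono arc2⟩
  refine ⟨⟨hmatch', fun M'' hM'' => by rw [hcard]; exact hM.2 M'' hM''⟩,
    by rw [hmv], by rw [hmv], ?_, ?_⟩
  · ext w
    simp only [Vplus, Set.mem_setOf_eq, hmv, reach_iff]
  · ext w
    simp only [Vminus, Set.mem_setOf_eq, hmv, reach_iff]
end
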